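/- arXiv:2102.13531 — 2 statements merged into one kernel-verified Lean document; each statement's English description precedes it below -/
import Mathlib

section
/- Let δ be a limit ordinal, let α be an ordinal, let (γ_ι : ι < δ) be a sequence of ordinals with γ_ι < α for every ι < δ, and let ρ and η be arbitrary ordinals. Then liminf_{ι<δ} (α^(η+2)·ρ + α^η·γ_ι) = α^(η+2)·ρ + α^η·(liminf_{ι<δ} γ_ι), where all arithmetic operations are ordinal addition, multiplication and exponentiation. -/
open Ordinal

/-- The inferior limit of `f` along a limit ordinal `δ`:
`liminf_{ι<δ} f(ι) = sup_{ξ<δ} inf { f(ι) : ξ ≤ ι < δ }`. -/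
noncomputable def ordLimInf (δ : Ordinal) (f : Ordinal → Ordinal) : Ordinal :=
  ⨆ ξ : Set.Iio δ, sInf (f '' Set.Ico ξ.1 δ)

universe u v

/-- A normal function commutes with `ordLimInf` of a bounded sequence. -/
lemma ordLimInf_comp_normal {f : Ordinal.{v} → Ordinal.{v}} (hf : Order.IsNormal f)
    (δ : Ordinal.{u}) (hδ : Order.IsSuccLimit δ) (γ : Ordinal.{u} → Ordinal.{v})
    (α : Ordinal.{v}) (hγ : ∀ ι < δ, γ ι < α) :
    ordLimInf δ (fun ι => f (γ ι)) = f (ordLimInf δ γ) := by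
  haveI : Nonempty (Set.Iio δ) := ⟨⟨0, hδ.pos⟩⟩
  unfold ordLimInf
  -- the family of infima
  set g : Set.Iio δ → Ordinal.{v} := fun ξ => sInf (γ '' Set.Ico ξ.1 δ) with hg
  have hmem : ∀ ξ : Set.Iio δ, g ξ ∈ γ '' Set.Ico ξ.1 δ := fun ξ =>
    csInf_mem ⟨γ ξ.1, ⟨ξ.1, ⟨le_rfl, ξ.2⟩, rfl⟩⟩
  have hbdd : BddAbove (Set.range g) := by
    refine ⟨α, ?_⟩
    rintro y ⟨ξ, rfl⟩
    obtain ⟨ι, hι, hιeq⟩ := hmem ξ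
    exact le_of_lt (hιeq ▸ hγ ι hι.2)
  have key : ∀ ξ : Set.Iio δ, sInf ((fun ι => f (γ ι)) '' Set.Ico ξ.1 δ) = f (g ξ) := by
    intro ξ
    apply le_antisymm
    · apply csInf_le'
      obtain ⟨ι, hι, hιeq⟩ := hmem ξ
      exact ⟨ι, hι, by simp only []; rw [hιeq]⟩
    · apply le_csInf
      · exact ⟨f (γ ξ.1), ⟨ξ.1, ⟨le_rfl, ξ.2⟩, rfl⟩⟩
      · rintro y ⟨ι, hι, rfl⟩
        exact hf.monotone (csInf_le' ⟨ι, hι, rfl⟩)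
  simp only [key]
  exact (hf.map_iSup hbdd).symm

theorem liminf_cnf (δ α : Ordinal) (hδ : Order.IsSuccLimit δ) (γ : Ordinal → Ordinal)
    (hγ : ∀ ι < δ, γ ι < α) (ρ η : Ordinal) :
    ordLimInf δ (fun ι => α ^ (η + 2) * ρ + α ^ η * γ ι) =
      α ^ (η + 2) * ρ + α ^ η * ordLimInf δ γ := by
  have hα : 0 < α := (zero_le : (0 : Ordinal) ≤ γ 0).trans_lt (hγ 0 hδ.pos)
  exact ordLimInf_comp_normal
    ((isNormal_add_right (α ^ (η + 2) * ρ)).comp (isNormal_mul_right (opow_pos η hα)))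
    δ hδ γ α hγ
end

section
/- Let δ be a limit ordinal, let α be an ordinal, let (γ_ι : ι < δ) be a sequence of ordinals with γ_ι < α for every ι < δ, and let ρ and η be arbitrary ordinals. If liminf_{ι<δ} γ_ι = α (a 'register overflow' at the limit stage), then liminf_{ι<δ} (α^(η+2)·ρ + α^η·γ_ι) = α^(η+2)·ρ + α^(η+1). -/
open Ordinal

theorem liminf_cnf_overflow (δ α : Ordinal) (hδ : Order.IsSuccLimit δ) (γ : Ordinal → Ordinal)
    (hγ : ∀ ι < δ, γ ι < α) (ρ η : Ordinal) (hover : ordLimInf δ γ = α) :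
    ordLimInf δ (fun ι => α ^ (η + 2) * ρ + α ^ η * γ ι) =
      α ^ (η + 2) * ρ + α ^ (η + 1) := by
  have hα : 0 < α := (zero_le).trans_lt (hγ 0 hδ.pos)
  have hb : 0 < α ^ η := opow_pos _ hα
  set c := α ^ (η + 2) * ρ with hc
  set b := α ^ η with hbdef
  have hne : Nonempty (Set.Iio δ) := ⟨⟨0, hδ.pos⟩⟩
  -- the inner inf commutes with the monotone map x ↦ c + b * x
  have key : ∀ ξ : Set.Iio δ,
      sInf ((fun ι => c + b * γ ι) '' Set.Ico ξ.1 δ) =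
        c + b * sInf (γ '' Set.Ico ξ.1 δ) := by
    intro ξ
    have hnonempty : (γ '' Set.Ico ξ.1 δ).Nonempty :=
      ⟨γ ξ.1, ⟨ξ.1, ⟨le_rfl, ξ.2⟩, rfl⟩⟩
    obtain ⟨ι₀, hι₀, hι₀eq⟩ := csInf_mem hnonempty
    apply le_antisymm
    · calc sInf ((fun ι => c + b * γ ι) '' Set.Ico ξ.1 δ) ≤ c + b * γ ι₀ :=
            csInf_le' ⟨ι₀, hι₀, rfl⟩
        _ = c + b * sInf (γ '' Set.Ico ξ.1 δ) := by rw [hι₀eq]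
    · have hne2 : ((fun ι => c + b * γ ι) '' Set.Ico ξ.1 δ).Nonempty :=
        ⟨c + b * γ ι₀, ⟨ι₀, hι₀, rfl⟩⟩
      apply le_csInf hne2
      rintro x ⟨ι, hι, rfl⟩
      have : sInf (γ '' Set.Ico ξ.1 δ) ≤ γ ι := csInf_le' ⟨ι, hι, rfl⟩
      exact add_le_add_right (mul_le_mul_right this b) c
  have hnormal : Order.IsNormal (fun x => c + b * x) :=
    (isNormal_add_right c).comp (isNormal_mul_right hb)
  calc ordLimInf δ (fun ι => c + b * γ ι)
      = ⨆ ξ : Set.Iio δ, (c + b * sInf (γ '' Set.Ico ξ.1 δ)) := by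
        unfold ordLimInf; exact iSup_congr key
    _ = c + b * ⨆ ξ : Set.Iio δ, sInf (γ '' Set.Ico ξ.1 δ) := by
        have hbdd : BddAbove (Set.range fun ξ : Set.Iio δ => sInf (γ '' Set.Ico ξ.1 δ)) := by
          refine ⟨α, ?_⟩
          rintro x ⟨ξ, rfl⟩
          have h1 : sInf (γ '' Set.Ico ξ.1 δ) ≤ γ ξ.1 := csInf_le' ⟨ξ.1, ⟨le_rfl, ξ.2⟩, rfl⟩
          exact (h1.trans_lt (hγ ξ.1 ξ.2)).le
        exact (hnormal.map_iSup hbdd).symm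
    _ = c + b * α := by rw [← hover]; rfl
    _ = c + α ^ (η + 1) := by rw [hbdef, ← opow_succ, Ordinal.add_one_eq_succ]
end
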